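/- Jacobian determinant of the affine coupling layer: let d < n, let σ : ℝ → ℝ be differentiable with σ(r) > 0 for all r, and let s, t : ℝᵈ → ℝ^{n−d} be differentiable. Define f : ℝᵈ × ℝ^{n−d} → ℝᵈ × ℝ^{n−d} by f(x₁, x₂) = (x₁, x₂ ⊙ σ(s(x₁)) + t(x₁)). Then f is differentiable at every point (x₁, x₂), and the determinant of its (total) derivative there equals ∏_{i=1}^{n−d} σ(s(x₁))ᵢ. -/

import Mathlib

open scoped BigOperators

/-- The affine coupling layer `f(x₁,x₂) = (x₁, x₂ ⊙ σ(s(x₁)) + t(x₁))`. -/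
def couplingLayer {n d : ℕ} (σ : ℝ → ℝ)
    (s t : (Fin d → ℝ) → (Fin (n - d) → ℝ)) :
    (Fin d → ℝ) × (Fin (n - d) → ℝ) → (Fin d → ℝ) × (Fin (n - d) → ℝ) :=
  fun x => (x.1, fun i => x.2 i * σ (s x.1 i) + t x.1 i)

/-- the affine coupling layer is differentiable everywhere
and the determinant of its total derivative at `(x₁,x₂)` is
`∏_{i} σ(s(x₁))ᵢ`. -/
theorem couplingLayer_jacobian_det {n d : ℕ} (hd : d < n)
    (σ : ℝ → ℝ) (hσpos : ∀ r : ℝ, 0 < σ r) (hσ : Differentiable ℝ σ)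
    (s t : (Fin d → ℝ) → (Fin (n - d) → ℝ))
    (hs : Differentiable ℝ s) (ht : Differentiable ℝ t)
    (x : (Fin d → ℝ) × (Fin (n - d) → ℝ)) :
    DifferentiableAt ℝ (couplingLayer (n := n) σ s t) x ∧
    (fderiv ℝ (couplingLayer (n := n) σ s t) x).det =
      ∏ i : Fin (n - d), σ (s x.1 i) := by
  -- derivatives of the scalar pieces coming from the first coordinate
  have hsi : ∀ i, DifferentiableAt ℝ (fun y => σ (s y i)) x.1 := by
    intro i; fun_prop
  have hti : ∀ i, DifferentiableAt ℝ (fun y => t y i) x.1 := by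
    intro i; fun_prop
  set D : Fin (n - d) → (Fin d → ℝ) →L[ℝ] ℝ :=
    fun i => fderiv ℝ (fun y => σ (s y i)) x.1 with hD
  set T : Fin (n - d) → (Fin d → ℝ) →L[ℝ] ℝ :=
    fun i => fderiv ℝ (fun y => t y i) x.1 with hT
  set L : Fin (n - d) → ((Fin d → ℝ) × (Fin (n - d) → ℝ)) →L[ℝ] ℝ := fun i =>
    x.2 i • ((D i).comp (ContinuousLinearMap.fst ℝ (Fin d → ℝ) (Fin (n - d) → ℝ))) +
      σ (s x.1 i) • ((ContinuousLinearMap.proj i).comp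
        (ContinuousLinearMap.snd ℝ (Fin d → ℝ) (Fin (n - d) → ℝ))) +
      (T i).comp (ContinuousLinearMap.fst ℝ (Fin d → ℝ) (Fin (n - d) → ℝ)) with hL
  set F : ((Fin d → ℝ) × (Fin (n - d) → ℝ)) →L[ℝ] ((Fin d → ℝ) × (Fin (n - d) → ℝ)) :=
    (ContinuousLinearMap.fst ℝ (Fin d → ℝ) (Fin (n - d) → ℝ)).prod
      (ContinuousLinearMap.pi L) with hF
  have hder : HasFDerivAt (couplingLayer (n := n) σ s t) F x := by
    apply HasFDerivAt.prodMk
    · exact hasFDerivAt_fst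
    · apply hasFDerivAt_pi''
      intro i
      rw [ContinuousLinearMap.proj_pi]
      have h1 : HasFDerivAt (fun p : (Fin d → ℝ) × (Fin (n - d) → ℝ) => p.2 i)
          ((ContinuousLinearMap.proj i).comp
            (ContinuousLinearMap.snd ℝ (Fin d → ℝ) (Fin (n - d) → ℝ))) x :=
        ((ContinuousLinearMap.proj i).comp
          (ContinuousLinearMap.snd ℝ (Fin d → ℝ) (Fin (n - d) → ℝ))).hasFDerivAt
      have h2 : HasFDerivAt (fun p : (Fin d → ℝ) × (Fin (n - d) → ℝ) => σ (s p.1 i))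
          ((D i).comp (ContinuousLinearMap.fst ℝ (Fin d → ℝ) (Fin (n - d) → ℝ))) x :=
        ((hsi i).hasFDerivAt).comp x hasFDerivAt_fst
      have h3 : HasFDerivAt (fun p : (Fin d → ℝ) × (Fin (n - d) → ℝ) => t p.1 i)
          ((T i).comp (ContinuousLinearMap.fst ℝ (Fin d → ℝ) (Fin (n - d) → ℝ))) x :=
        ((hti i).hasFDerivAt).comp x hasFDerivAt_fst
      exact (h1.mul h2).add h3
  refine ⟨hder.differentiableAt, ?_⟩
  rw [hder.fderiv]
  -- now compute the determinant of `F` using a block-triangular matrix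
  classical
  set b : Module.Basis (Fin d ⊕ Fin (n - d)) ℝ ((Fin d → ℝ) × (Fin (n - d) → ℝ)) :=
    (Pi.basisFun ℝ (Fin d)).prod (Pi.basisFun ℝ (Fin (n - d)))
  rw [ContinuousLinearMap.det, ← LinearMap.det_toMatrix b]
  have hmat : LinearMap.toMatrix b b (F : ((Fin d → ℝ) × (Fin (n - d) → ℝ)) →ₗ[ℝ] _) =
      Matrix.fromBlocks 1 0
        (Matrix.of fun i j => L i (Pi.single j 1, 0))
        (Matrix.diagonal fun i => σ (s x.1 i)) := by
    ext k l
    have hb : ∀ l : Fin d ⊕ Fin (n - d), b l =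
        Sum.elim (fun j => ((Pi.single j 1 : Fin d → ℝ), (0 : Fin (n - d) → ℝ)))
          (fun j => ((0 : Fin d → ℝ), (Pi.single j 1 : Fin (n - d) → ℝ))) l := by
      intro l
      cases l with
      | inl j =>
          ext
          · simp [b, Module.Basis.prod_apply_inl_fst, Pi.basisFun_apply]
          · simp [b, Module.Basis.prod_apply_inl_snd]
      | inr j =>
          ext
          · simp [b, Module.Basis.prod_apply_inr_fst]
          · simp [b, Module.Basis.prod_apply_inr_snd, Pi.basisFun_apply]
    rw [LinearMap.toMatrix_apply, hb]
    cases k with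
    | inl i =>
      cases l with
      | inl j =>
          simp [b, Module.Basis.prod_repr_inl, hF, Pi.basisFun_repr, Matrix.one_apply,
            Pi.single_apply, eq_comm]
      | inr j =>
          simp [b, Module.Basis.prod_repr_inl, hF, Pi.basisFun_repr]
    | inr i =>
      cases l with
      | inl j =>
          simp [b, Module.Basis.prod_repr_inr, hF, Pi.basisFun_repr]
      | inr j =>
          simp [b, Module.Basis.prod_repr_inr, hF, Pi.basisFun_repr, hL,
            Matrix.diagonal_apply, Pi.single_apply]
  rw [hmat, Matrix.det_fromBlocks_zero₁₂, Matrix.det_one, one_mul,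
    Matrix.det_diagonal]
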